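/- Suppose q1 and q0 are mutually absolutely continuous, and let r* := dq1/dq0 (so r* > 0 q0-a.e.). Fix an integer K ≥ 2 and take ν = 0, and assume L_{K;0}(r*) is finite. Then for every measurable r : X → (0,∞) one has L_{K;0}(r*) ≤ L_{K;0}(r), and if a measurable r : X → (0,∞) satisfies L_{K;0}(r) = L_{K;0}(r*) then there exists a constant C > 0 such that r = C · r* holds q0-almost everywhere. -/

import Mathlib

open MeasureTheory
open scoped ENNReal

/-- The class measure on `X^K` under which the `z`-th coordinate has law `q1` and the
remaining coordinates are i.i.d. with law `q0`, all independent. -/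
noncomputable def classMeasure {X : Type*} [MeasurableSpace X]
    (q1 q0 : Measure X) (K : ℕ) (z : Fin K) : Measure (Fin K → X) :=
  Measure.pi fun i => if i = z then q1 else q0

/-- The InfoNCE-anchor objective
`L_{K;ν}(r) = −(K/(K+ν)) E_{q1 ⊗ q0^{K−1}}[log(r(x_1)/(ν + ∑_i r(x_i)))]
            − (ν/(K+ν)) E_{q0^{⊗K}}[log(ν/(ν + ∑_i r(x_i)))]`,
valued in `[0, ∞]` (both integrands are nonpositive for `ν ≥ 0` and `r > 0`; the second
term vanishes when `ν = 0`). -/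
noncomputable def anchorLoss {X : Type*} [MeasurableSpace X]
    (q1 q0 : Measure X) (K : ℕ) (ν : ℝ) (r : X → ℝ) : ℝ≥0∞ :=
  if hK : 0 < K then
    ENNReal.ofReal ((K : ℝ) / (K + ν)) *
      ∫⁻ x : Fin K → X,
        ENNReal.ofReal (- Real.log (r (x ⟨0, hK⟩) / (ν + ∑ i, r (x i))))
        ∂(classMeasure q1 q0 K ⟨0, hK⟩)
    + ENNReal.ofReal (ν / (K + ν)) *
      ∫⁻ x : Fin K → X,
        ENNReal.ofReal (- Real.log (ν / (ν + ∑ i, r (x i))))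
        ∂(Measure.pi fun _ : Fin K => q0)
  else 0

section AuxGibbs

variable {K : ℕ}

private lemma gibbs_diff [NeZero K] (w a : Fin K → ℝ) (hw : ∀ z, 0 < w z) (ha : ∀ z, 0 < a z) :
    (∑ z, w z * (Real.log (∑ i, a i) - Real.log (a z)))
      - (∑ z, w z * (Real.log (∑ i, w i) - Real.log (w z)))
    = ∑ z, w z * (- Real.log ((a z * ∑ i, w i) / (w z * ∑ i, a i))) := by
  have hW : (0:ℝ) < ∑ i, w i := Finset.sum_pos (fun i _ => hw i) Finset.univ_nonempty
  have hS : (0:ℝ) < ∑ i, a i := Finset.sum_pos (fun i _ => ha i) Finset.univ_nonempty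
  rw [← Finset.sum_sub_distrib]
  refine Finset.sum_congr rfl fun z _ => ?_
  rw [Real.log_div (ne_of_gt (mul_pos (ha z) hW)) (ne_of_gt (mul_pos (hw z) hS)),
    Real.log_mul (ne_of_gt (ha z)) (ne_of_gt hW),
    Real.log_mul (ne_of_gt (hw z)) (ne_of_gt hS)]
  ring

private lemma gibbs_term_le (wz t : ℝ) (hw : 0 < wz) (ht : 0 < t) :
    wz * (1 - t) ≤ wz * (- Real.log t) := by
  have := Real.log_le_sub_one_of_pos ht
  nlinarith

private lemma gibbs_sum_eval [NeZero K] (w a : Fin K → ℝ) (hw : ∀ z, 0 < w z)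
    (ha : ∀ z, 0 < a z) :
    ∑ z, w z * (1 - (a z * ∑ i, w i) / (w z * ∑ i, a i)) = 0 := by
  have hW : (0:ℝ) < ∑ i, w i := Finset.sum_pos (fun i _ => hw i) Finset.univ_nonempty
  have hS : (0:ℝ) < ∑ i, a i := Finset.sum_pos (fun i _ => ha i) Finset.univ_nonempty
  have key : ∀ z ∈ Finset.univ, w z * (1 - (a z * ∑ i, w i) / (w z * ∑ i, a i))
      = w z - a z * ((∑ i, w i) / (∑ i, a i)) := by
    intro z _
    have hz := ne_of_gt (hw z)
    have hs := ne_of_gt hS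
    field_simp
  rw [Finset.sum_congr rfl key, Finset.sum_sub_distrib, ← Finset.sum_mul]
  field_simp
  ring

private lemma gibbs_le [NeZero K] (w a : Fin K → ℝ) (hw : ∀ z, 0 < w z) (ha : ∀ z, 0 < a z) :
    (∑ z, w z * (Real.log (∑ i, w i) - Real.log (w z)))
      ≤ ∑ z, w z * (Real.log (∑ i, a i) - Real.log (a z)) := by
  have hW : (0:ℝ) < ∑ i, w i := Finset.sum_pos (fun i _ => hw i) Finset.univ_nonempty
  have hS : (0:ℝ) < ∑ i, a i := Finset.sum_pos (fun i _ => ha i) Finset.univ_nonempty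
  have h := gibbs_diff w a hw ha
  have h2 : 0 ≤ ∑ z, w z * (- Real.log ((a z * ∑ i, w i) / (w z * ∑ i, a i))) := by
    rw [← gibbs_sum_eval w a hw ha]
    exact Finset.sum_le_sum fun z _ => gibbs_term_le _ _ (hw z)
      (div_pos (mul_pos (ha z) hW) (mul_pos (hw z) hS))
  linarith

private lemma gibbs_eq [NeZero K] (w a : Fin K → ℝ) (hw : ∀ z, 0 < w z) (ha : ∀ z, 0 < a z)
    (heq : (∑ z, w z * (Real.log (∑ i, a i) - Real.log (a z)))
      = ∑ z, w z * (Real.log (∑ i, w i) - Real.log (w z))) :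
    ∀ z, a z * (∑ i, w i) = w z * (∑ i, a i) := by
  have hW : (0:ℝ) < ∑ i, w i := Finset.sum_pos (fun i _ => hw i) Finset.univ_nonempty
  have hS : (0:ℝ) < ∑ i, a i := Finset.sum_pos (fun i _ => ha i) Finset.univ_nonempty
  have h := gibbs_diff w a hw ha
  rw [heq, sub_self] at h
  by_contra hcon
  push_neg at hcon
  obtain ⟨z0, hz0⟩ := hcon
  have hd0 : w z0 * ∑ i, a i ≠ 0 := ne_of_gt (mul_pos (hw z0) hS)
  have ht0 : (a z0 * ∑ i, w i) / (w z0 * ∑ i, a i) ≠ 1 := fun h1 =>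
    hz0 ((div_eq_one_iff_eq hd0).mp h1)
  have htpos : (0:ℝ) < (a z0 * ∑ i, w i) / (w z0 * ∑ i, a i) :=
    div_pos (mul_pos (ha z0) hW) (mul_pos (hw z0) hS)
  have hstrict : w z0 * (1 - (a z0 * ∑ i, w i) / (w z0 * ∑ i, a i))
      < w z0 * (- Real.log ((a z0 * ∑ i, w i) / (w z0 * ∑ i, a i))) := by
    have hlt := Real.log_lt_sub_one_of_pos htpos ht0
    have := hw z0
    nlinarith
  have hsum : ∑ z, w z * (1 - (a z * ∑ i, w i) / (w z * ∑ i, a i))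
      < ∑ z, w z * (- Real.log ((a z * ∑ i, w i) / (w z * ∑ i, a i))) := by
    refine Finset.sum_lt_sum (fun z _ => gibbs_term_le _ _ (hw z)
      (div_pos (mul_pos (ha z) hW) (mul_pos (hw z) hS)))
      ⟨z0, Finset.mem_univ z0, hstrict⟩
  rw [gibbs_sum_eval w a hw ha, ← h] at hsum
  exact lt_irrefl _ hsum

end AuxGibbs

private lemma lintegral_fin_pi_prod {n : ℕ} {E : Type*} [MeasurableSpace E]
    (μ : Fin n → Measure E) [∀ i, SigmaFinite (μ i)]
    (f : Fin n → E → ℝ≥0∞) (hf : ∀ i, Measurable (f i)) :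
    ∫⁻ x : Fin n → E, ∏ i, f i (x i) ∂ Measure.pi μ = ∏ i, ∫⁻ y, f i y ∂ μ i := by
  induction n with
  | zero =>
      simp only [Finset.univ_eq_empty, Finset.prod_empty]
      rw [lintegral_const, Measure.pi_univ]
      simp
  | succ n ih =>
      have hg : Measurable fun y : Fin n → E => ∏ j, f j.succ (y j) := by
        apply Finset.measurable_prod
        intro j _
        exact (hf j.succ).comp (measurable_pi_apply j)
      have h := (measurePreserving_piFinSuccAbove μ 0).symm
      rw [← h.lintegral_comp_emb
        (MeasurableEquiv.piFinSuccAbove (fun _ : Fin (n+1) => E) 0).symm.measurableEmbedding]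
      simp_rw [MeasurableEquiv.piFinSuccAbove_symm_apply, Fin.insertNthEquiv,
        Fin.prod_univ_succ, Fin.insertNth_zero]
      simp only [Fin.zero_succAbove, Function.comp_def, Fin.cons_zero, Fin.cons_succ,
        Equiv.coe_fn_mk, cast_eq]
      rw [lintegral_prod_mul (f := f 0) (g := fun y : Fin n → E => ∏ j, f j.succ (y j))
        (hf 0).aemeasurable hg.aemeasurable,
        ih (fun i => μ (Fin.succ i)) (fun i => f (Fin.succ i)) (fun i => hf _)]

private lemma classMeasure_eq_withDensity {X : Type*} [MeasurableSpace X]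
    (q1 q0 : Measure X) [IsProbabilityMeasure q1] [IsProbabilityMeasure q0]
    (h10 : q1 ≪ q0) (K : ℕ) (z : Fin K) :
    classMeasure q1 q0 K z
      = (Measure.pi fun _ : Fin K => q0).withDensity (fun x => q1.rnDeriv q0 (x z)) := by
  classical
  set D := q1.rnDeriv q0 with hDdef
  have hD : Measurable D := Measure.measurable_rnDeriv q1 q0
  have hq1 : q0.withDensity D = q1 := Measure.withDensity_rnDeriv_eq q1 q0 h10
  haveI : ∀ i : Fin K, SigmaFinite ((fun i => if i = z then q1 else q0) i) := by
    intro i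
    by_cases hi : i = z <;> simp [hi] <;> infer_instance
  refine Measure.pi_eq fun s hs => ?_
  rw [withDensity_apply _ (MeasurableSet.univ_pi hs),
    ← lintegral_indicator (MeasurableSet.univ_pi hs) _]
  have hpt : ∀ x : Fin K → X, (Set.univ.pi s).indicator (fun x => D (x z)) x
      = ∏ i, (if i = z then (s z).indicator D else (s i).indicator 1) (x i) := by
    intro x
    by_cases hx : x ∈ Set.univ.pi s
    · rw [Set.indicator_of_mem hx]
      have hmem : ∀ i, x i ∈ s i := fun i => hx i (Set.mem_univ i)
      have key : ∀ i, (if i = z then (s z).indicator D else (s i).indicator 1) (x i)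
          = if i = z then D (x z) else 1 := by
        intro i
        by_cases hi : i = z
        · subst hi; simp [Set.indicator_of_mem (hmem i)]
        · simp [hi, Set.indicator_of_mem (hmem i)]
      rw [Finset.prod_congr rfl (fun i _ => key i)]
      simp
    · rw [Set.indicator_of_notMem hx]
      simp only [Set.mem_pi, Set.mem_univ, forall_true_left, not_forall] at hx
      obtain ⟨j, hj⟩ := hx
      refine (Finset.prod_eq_zero (Finset.mem_univ j) ?_).symm
      by_cases hjz : j = z
      · subst hjz; simp [Set.indicator_of_notMem hj]
      · simp [hjz, Set.indicator_of_notMem hj]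
  simp_rw [hpt]
  rw [lintegral_fin_pi_prod (fun _ => q0)
    (fun i => if i = z then (s z).indicator D else (s i).indicator 1)
    (fun i => by
      by_cases hi : i = z
      · subst hi; simpa using hD.indicator (hs i)
      · simp only [hi, if_false]; exact measurable_const.indicator (hs i))]
  refine Finset.prod_congr rfl fun i _ => ?_
  by_cases hi : i = z
  · subst hi
    rw [if_pos rfl, if_pos rfl, lintegral_indicator (hs i) _, ← withDensity_apply _ (hs i), hq1]
  · rw [if_neg hi, if_neg hi, lintegral_indicator (hs i) _]
    simp

private lemma lintegral_pi_comp_equiv {X : Type*} [MeasurableSpace X] (q0 : Measure X)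
    [SigmaFinite q0] {K : ℕ} (e : Fin K ≃ Fin K) (g : (Fin K → X) → ℝ≥0∞) :
    ∫⁻ x : Fin K → X, g (fun j => x (e.symm j)) ∂(Measure.pi fun _ : Fin K => q0)
      = ∫⁻ x, g x ∂(Measure.pi fun _ : Fin K => q0) := by
  have h := MeasureTheory.measurePreserving_piCongrLeft (fun _ : Fin K => q0) e
  have hemb := (MeasurableEquiv.piCongrLeft (fun _ : Fin K => X) e).measurableEmbedding
  have h2 := h.lintegral_comp_emb hemb g
  rw [← h2]
  refine lintegral_congr fun x => ?_
  congr 1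
  funext j
  rw [MeasurableEquiv.coe_piCongrLeft]
  refine Eq.symm ?_
  conv_lhs => rw [← e.apply_symm_apply j]
  exact Equiv.piCongrLeft_apply_apply (fun _ : Fin K => X) e x (e.symm j)

/-- lift a `q0`-a.e. property to all coordinates under the product measure -/
private lemma ae_pi_coord {X : Type*} [MeasurableSpace X] (q0 : Measure X)
    [IsProbabilityMeasure q0] {K : ℕ} {P : X → Prop} (hP : ∀ᵐ y ∂q0, P y) :
    ∀ᵐ x : Fin K → X ∂(Measure.pi fun _ : Fin K => q0), ∀ z, P (x z) := by
  rw [ae_all_iff]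
  intro z
  rw [ae_iff]
  have hnull : q0 {y | ¬ P y} = 0 := hP
  exact Measure.pi_eval_preimage_null (μ := fun _ : Fin K => q0) (i := z) hnull

private lemma anchor_repr {X : Type*} [MeasurableSpace X] (q1 q0 : Measure X)
    [IsProbabilityMeasure q1] [IsProbabilityMeasure q0] (h10 : q1 ≪ q0)
    {K : ℕ} (hK0 : 0 < K) (r : X → ℝ) (hr : Measurable r)
    (hrpos : ∀ᵐ y ∂q0, 0 < r y) :
    (K : ℝ≥0∞) * anchorLoss q1 q0 K 0 r
      = ∫⁻ x : Fin K → X,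
          ENNReal.ofReal (∑ z, ((q1.rnDeriv q0 (x z)).toReal)
            * (Real.log (∑ i, r (x i)) - Real.log (r (x z))))
          ∂(Measure.pi fun _ : Fin K => q0) := by
  classical
  haveI : NeZero K := ⟨hK0.ne'⟩
  set D := q1.rnDeriv q0 with hDdef
  have hD : Measurable D := Measure.measurable_rnDeriv q1 q0
  set z0 : Fin K := ⟨0, hK0⟩ with hz0def
  set PP : Measure (Fin K → X) := Measure.pi fun _ : Fin K => q0 with hPPdef
  set A : Fin K → (Fin K → X) → ℝ≥0∞ := fun z x =>
    ENNReal.ofReal (Real.log (∑ i, r (x i)) - Real.log (r (x z))) * D (x z) with hAdef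
  have hsum_meas : Measurable fun x : Fin K → X => ∑ i, r (x i) :=
    Finset.measurable_sum Finset.univ fun i _ => hr.comp (measurable_pi_apply i)
  have hA_meas : ∀ z, Measurable (A z) := by
    intro z
    exact ((ENNReal.measurable_ofReal.comp
      ((Real.measurable_log.comp hsum_meas).sub
        (Real.measurable_log.comp (hr.comp (measurable_pi_apply z))))).mul
      (hD.comp (measurable_pi_apply z)))
  have hgood : ∀ᵐ x : Fin K → X ∂PP, ∀ z, 0 < r (x z) ∧ D (x z) < ⊤ :=
    ae_pi_coord q0 (hrpos.and (Measure.rnDeriv_lt_top q1 q0))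
  have hG : Measurable fun x : Fin K → X =>
      ENNReal.ofReal (- Real.log (r (x z0) / (0 + ∑ i, r (x i)))) := by
    refine ENNReal.measurable_ofReal.comp (Measurable.neg (Real.measurable_log.comp ?_))
    exact (hr.comp (measurable_pi_apply z0)).div (measurable_const.add hsum_meas)
  have hL : anchorLoss q1 q0 K 0 r
      = ∫⁻ x, ENNReal.ofReal (- Real.log (r (x z0) / (0 + ∑ i, r (x i))))
          ∂(classMeasure q1 q0 K z0) := by
    rw [anchorLoss, dif_pos hK0]
    have h1 : ENNReal.ofReal ((K:ℝ)/((K:ℝ)+0)) = 1 := by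
      rw [add_zero, div_self (Nat.cast_ne_zero.mpr hK0.ne'), ENNReal.ofReal_one]
    rw [h1, one_mul]
    simp [hz0def]
  have step1 : anchorLoss q1 q0 K 0 r = ∫⁻ x, A z0 x ∂PP := by
    rw [hL, classMeasure_eq_withDensity q1 q0 h10 K z0,
      lintegral_withDensity_eq_lintegral_mul _
        (f := fun x : Fin K → X => q1.rnDeriv q0 (x z0))
        (hD.comp (measurable_pi_apply z0)) hG]
    refine lintegral_congr_ae (hgood.mono fun x hx => ?_)
    have hrz : 0 < r (x z0) := (hx z0).1
    have hS : 0 < ∑ i, r (x i) :=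
      Finset.sum_pos (fun i _ => (hx i).1) Finset.univ_nonempty
    simp only [Pi.mul_apply, hAdef, zero_add]
    rw [Real.log_div hrz.ne' hS.ne', neg_sub, mul_comm]
  have hswap : ∀ z : Fin K, ∫⁻ x, A z x ∂PP = ∫⁻ x, A z0 x ∂PP := by
    intro z
    have h2 := lintegral_pi_comp_equiv q0 (Equiv.swap z0 z) (A z0)
    rw [← h2]
    refine lintegral_congr fun x => ?_
    simp only [hAdef, Equiv.symm_swap]
    rw [Equiv.swap_apply_left]
    rw [Equiv.sum_comp (Equiv.swap z0 z) fun i => r (x i)]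
  have step3 : (K : ℝ≥0∞) * anchorLoss q1 q0 K 0 r = ∫⁻ x, ∑ z, A z x ∂PP := by
    rw [lintegral_finset_sum _ fun z _ => hA_meas z]
    rw [Finset.sum_congr rfl fun z _ => hswap z, Finset.sum_const, Finset.card_univ,
      Fintype.card_fin, step1, nsmul_eq_mul]
  rw [step3]
  refine lintegral_congr_ae (hgood.mono fun x hx => ?_)
  have hS : 0 < ∑ i, r (x i) :=
    Finset.sum_pos (fun i _ => (hx i).1) Finset.univ_nonempty
  have hterm : ∀ z : Fin K, A z x
      = ENNReal.ofReal (((D (x z)).toReal)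
          * (Real.log (∑ i, r (x i)) - Real.log (r (x z)))) := by
    intro z
    have hfin : D (x z) ≠ ⊤ := (hx z).2.ne
    have hle : r (x z) ≤ ∑ i, r (x i) :=
      Finset.single_le_sum (fun i _ => ((hx i).1).le) (Finset.mem_univ z)
    rw [ENNReal.ofReal_mul ENNReal.toReal_nonneg, ENNReal.ofReal_toReal hfin, hAdef]
    rw [mul_comm]
  show (∑ z : Fin K, A z x) = ENNReal.ofReal (∑ z : Fin K,
    (D (x z)).toReal * (Real.log (∑ i, r (x i)) - Real.log (r (x z))))
  rw [Finset.sum_congr rfl fun z _ => hterm z,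
    ENNReal.ofReal_sum_of_nonneg]
  intro z _
  have hle : r (x z) ≤ ∑ i, r (x i) :=
    Finset.single_le_sum (fun i _ => ((hx i).1).le) (Finset.mem_univ z)
  exact mul_nonneg ENNReal.toReal_nonneg
    (sub_nonneg.mpr (Real.log_le_log (hx z).1 hle))

private lemma map_eval_pair {X : Type*} [MeasurableSpace X] (q0 : Measure X)
    [IsProbabilityMeasure q0] {K : ℕ} (z0 z1 : Fin K) (hne : z0 ≠ z1) :
    Measure.map (fun x : Fin K → X => (x z0, x z1)) (Measure.pi fun _ : Fin K => q0)
      = q0.prod q0 := by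
  classical
  refine (Measure.prod_eq fun s t hs ht => ?_).symm
  rw [Measure.map_apply ((measurable_pi_apply z0).prodMk (measurable_pi_apply z1))
    (hs.prod ht)]
  have hset : (fun x : Fin K → X => (x z0, x z1)) ⁻¹' (s ×ˢ t)
      = Set.univ.pi (fun i => if i = z0 then s else if i = z1 then t else Set.univ) := by
    ext x
    simp only [Set.mem_preimage, Set.mem_prod, Set.mem_pi, Set.mem_univ, forall_true_left]
    constructor
    · rintro ⟨h1, h2⟩ i
      split_ifs with h h'
      · subst h; exact h1
      · subst h'; exact h2
      · trivial
    · intro h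
      refine ⟨?_, ?_⟩
      · have := h z0; simpa using this
      · have := h z1; simp only [if_neg (Ne.symm hne), if_pos rfl] at this; exact this
  rw [hset, Measure.pi_pi]
  rw [← Finset.mul_prod_erase Finset.univ _ (Finset.mem_univ z0)]
  rw [← Finset.mul_prod_erase (Finset.univ.erase z0) _
    (Finset.mem_erase.mpr ⟨Ne.symm hne, Finset.mem_univ z1⟩)]
  rw [if_pos rfl, if_neg (Ne.symm hne), if_pos rfl]
  have hone : ∀ i ∈ (Finset.univ.erase z0).erase z1,
      q0 (if i = z0 then s else if i = z1 then t else Set.univ) = 1 := by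
    intro i hi
    rw [Finset.mem_erase, Finset.mem_erase] at hi
    rw [if_neg hi.2.1, if_neg hi.1, measure_univ]
  rw [Finset.prod_congr rfl hone, Finset.prod_const_one, mul_one]

/-- Fisher consistency, `ν = 0`, `K ≥ 2`: the density ratio `r* = dq1/dq0` is a
global minimizer of the InfoNCE objective (anchor weight `ν = 0`), and any minimizer is a
positive constant multiple of `r*`, `q0`-a.e. -/
theorem anchorLoss_fisher_consistency_zero_nu
    {X : Type*} [MeasurableSpace X] (q1 q0 : Measure X)
    [IsProbabilityMeasure q1] [IsProbabilityMeasure q0]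
    (h10 : q1 ≪ q0) (h01 : q0 ≪ q1)
    (K : ℕ) (hK : 2 ≤ K)
    (h_fin : anchorLoss q1 q0 K 0 (fun x => (q1.rnDeriv q0 x).toReal) ≠ ⊤) :
    (∀ r : X → ℝ, Measurable r → (∀ x, 0 < r x) →
        anchorLoss q1 q0 K 0 (fun x => (q1.rnDeriv q0 x).toReal)
          ≤ anchorLoss q1 q0 K 0 r)
    ∧ (∀ r : X → ℝ, Measurable r → (∀ x, 0 < r x) →
        anchorLoss q1 q0 K 0 r
          = anchorLoss q1 q0 K 0 (fun x => (q1.rnDeriv q0 x).toReal) →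
        ∃ C : ℝ, 0 < C ∧ ∀ᵐ x ∂q0, r x = C * (q1.rnDeriv q0 x).toReal) := by
  classical
  have hK0 : 0 < K := lt_of_lt_of_le two_pos hK
  haveI : NeZero K := ⟨hK0.ne'⟩
  set ρ : X → ℝ := fun x => (q1.rnDeriv q0 x).toReal with hρdef
  have hρmeas : Measurable ρ := (Measure.measurable_rnDeriv q1 q0).ennreal_toReal
  have hρpos : ∀ᵐ y ∂q0, 0 < ρ y := by
    have h1 : ∀ᵐ y ∂q1, 0 < q1.rnDeriv q0 y := Measure.rnDeriv_pos h10
    have h2 : ∀ᵐ y ∂q0, 0 < q1.rnDeriv q0 y := h1.filter_mono h01.ae_le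
    filter_upwards [h2, Measure.rnDeriv_lt_top q1 q0] with y hy1 hy2
    exact ENNReal.toReal_pos hy1.ne' hy2.ne
  have hKne : (K : ℝ≥0∞) ≠ 0 := Nat.cast_ne_zero.mpr hK0.ne'
  have hKfin : (K : ℝ≥0∞) ≠ ⊤ := ENNReal.natCast_ne_top K
  have hρrepr := anchor_repr q1 q0 h10 hK0 ρ hρmeas hρpos
  have hle : ∀ r : X → ℝ, Measurable r → (∀ x, 0 < r x) →
      anchorLoss q1 q0 K 0 ρ ≤ anchorLoss q1 q0 K 0 r := by
    intro r hr hrpos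
    have hrepr := anchor_repr q1 q0 h10 hK0 r hr (Filter.Eventually.of_forall hrpos)
    rw [← ENNReal.mul_le_mul_iff_right hKne hKfin, hρrepr, hrepr]
    refine lintegral_mono_ae ?_
    filter_upwards [ae_pi_coord q0 hρpos] with x hx
    exact ENNReal.ofReal_le_ofReal
      (gibbs_le (fun z => ρ (x z)) (fun z => r (x z)) hx (fun z => hrpos (x z)))
  refine ⟨hle, ?_⟩
  intro r hr hrpos heq
  set PP : Measure (Fin K → X) := Measure.pi fun _ : Fin K => q0 with hPPdef
  set Ψρ : (Fin K → X) → ℝ := fun x =>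
    ∑ z, ρ (x z) * (Real.log (∑ i, ρ (x i)) - Real.log (ρ (x z))) with hΨρdef
  set Ψr : (Fin K → X) → ℝ := fun x =>
    ∑ z, ρ (x z) * (Real.log (∑ i, r (x i)) - Real.log (r (x z))) with hΨrdef
  have hsum_meas : ∀ (f : X → ℝ), Measurable f →
      Measurable fun x : Fin K → X => ∑ i, f (x i) := fun f hf =>
    Finset.measurable_sum Finset.univ fun i _ => hf.comp (measurable_pi_apply i)
  have hΨmeas : ∀ (f : X → ℝ), Measurable f → Measurable fun x : Fin K → X =>
      ∑ z, ρ (x z) * (Real.log (∑ i, f (x i)) - Real.log (f (x z))) := by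
    intro f hf
    refine Finset.measurable_sum Finset.univ fun z _ => ?_
    exact (hρmeas.comp (measurable_pi_apply z)).mul
      ((Real.measurable_log.comp (hsum_meas f hf)).sub
        (Real.measurable_log.comp (hf.comp (measurable_pi_apply z))))
  have hΨρmeas : Measurable Ψρ := hΨmeas ρ hρmeas
  have hΨrmeas : Measurable Ψr := hΨmeas r hr
  have hrrepr := anchor_repr q1 q0 h10 hK0 r hr (Filter.Eventually.of_forall hrpos)
  have hIeq : ∫⁻ x, ENNReal.ofReal (Ψr x) ∂PP = ∫⁻ x, ENNReal.ofReal (Ψρ x) ∂PP := by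
    rw [← hrrepr, ← hρrepr, heq]
  have hI0fin : ∫⁻ x, ENNReal.ofReal (Ψρ x) ∂PP ≠ ⊤ := by
    rw [← hρrepr]
    exact ENNReal.mul_ne_top hKfin h_fin
  have hsplit : ∫⁻ x, ENNReal.ofReal (Ψr x) ∂PP
      = ∫⁻ x, ENNReal.ofReal (Ψρ x) ∂PP + ∫⁻ x, ENNReal.ofReal (Ψr x - Ψρ x) ∂PP := by
    rw [← lintegral_add_left hΨρmeas.ennreal_ofReal]
    refine lintegral_congr_ae ?_
    filter_upwards [ae_pi_coord q0 hρpos] with x hx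
    have h1 : Ψρ x ≤ Ψr x :=
      gibbs_le (fun z => ρ (x z)) (fun z => r (x z)) hx (fun z => hrpos (x z))
    have h2 : 0 ≤ Ψρ x := by
      refine Finset.sum_nonneg fun z _ => mul_nonneg (hx z).le (sub_nonneg.mpr ?_)
      exact Real.log_le_log (hx z)
        (Finset.single_le_sum (fun i _ => (hx i).le) (Finset.mem_univ z))
    rw [← ENNReal.ofReal_add h2 (sub_nonneg.mpr h1), add_sub_cancel]
  have hzero : ∫⁻ x, ENNReal.ofReal (Ψr x - Ψρ x) ∂PP = 0 := by
    refine (ENNReal.add_right_inj hI0fin).mp ?_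
    rw [← hsplit, hIeq, add_zero]
  have hdiff0 : ∀ᵐ x ∂PP, ENNReal.ofReal (Ψr x - Ψρ x) = 0 := by
    have h' := (lintegral_eq_zero_iff
      (f := fun x => ENNReal.ofReal (Ψr x - Ψρ x))
      (hΨrmeas.sub hΨρmeas).ennreal_ofReal).mp hzero
    filter_upwards [h'] with x hx
    simpa using hx
  set z0 : Fin K := ⟨0, hK0⟩ with hz0def
  set z1 : Fin K := ⟨1, lt_of_lt_of_le one_lt_two hK⟩ with hz1def
  have hne : z0 ≠ z1 := by
    simp only [hz0def, hz1def, Ne, Fin.mk.injEq]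
    omega
  have key : ∀ᵐ x ∂PP, r (x z0) * ρ (x z1) = r (x z1) * ρ (x z0) := by
    filter_upwards [hdiff0, ae_pi_coord q0 hρpos] with x hx0 hx
    have h1 : Ψρ x ≤ Ψr x :=
      gibbs_le (fun z => ρ (x z)) (fun z => r (x z)) hx (fun z => hrpos (x z))
    have h2 : Ψr x - Ψρ x ≤ 0 := ENNReal.ofReal_eq_zero.mp hx0
    have heqx : Ψr x = Ψρ x := le_antisymm (by linarith) h1
    have hall := gibbs_eq (fun z => ρ (x z)) (fun z => r (x z)) hx
      (fun z => hrpos (x z)) heqx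
    have e0 := hall z0
    have e1 := hall z1
    have hW : 0 < ∑ i, ρ (x i) :=
      Finset.sum_pos (fun i _ => hx i) Finset.univ_nonempty
    apply mul_right_cancel₀ hW.ne'
    linear_combination ρ (x z1) * e0 - ρ (x z0) * e1
  have hmset : MeasurableSet {p : X × X | r p.1 * ρ p.2 = r p.2 * ρ p.1} := by
    apply measurableSet_eq_fun
    · exact (hr.comp measurable_fst).mul (hρmeas.comp measurable_snd)
    · exact (hr.comp measurable_snd).mul (hρmeas.comp measurable_fst)
  have hmapped : ∀ᵐ p : X × X ∂(q0.prod q0), r p.1 * ρ p.2 = r p.2 * ρ p.1 := by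
    rw [← map_eval_pair q0 z0 z1 hne]
    exact (ae_map_iff
      ((measurable_pi_apply z0).prodMk (measurable_pi_apply z1)).aemeasurable hmset).mpr key
  have hfub : ∀ᵐ a ∂q0, ∀ᵐ b ∂q0, r a * ρ b = r b * ρ a :=
    Measure.ae_ae_of_ae_prod hmapped
  haveI : (MeasureTheory.ae q0).NeBot :=
    MeasureTheory.ae_neBot.mpr (IsProbabilityMeasure.ne_zero q0)
  obtain ⟨x₀, hx₀pos, hx₀⟩ := (hρpos.and hfub).exists
  refine ⟨r x₀ / ρ x₀, div_pos (hrpos x₀) hx₀pos, ?_⟩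
  filter_upwards [hx₀] with y hy
  rw [div_mul_eq_mul_div, eq_div_iff hx₀pos.ne']
  linarith [hy]
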